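/- For every integer t ≥ 0, letting u(t) = (t+2)·log(t+2) + t·log t - 2(t+1)·log(t+1) (with 0·log 0 = 0), we have 1/(t+1) ≤ u(t) ≤ log 4 / (t+1). -/

import Mathlib

open Real Set

private lemma artanh_lower (z : ℝ) (h0 : 0 ≤ z) (h1 : z < 1) :
    2*z + 2*z^3/3 ≤ Real.log (1+z) - Real.log (1-z) := by
  set f : ℝ → ℝ := fun x => Real.log (1+x) - Real.log (1-x) - (2*x + 2*x^3/3) with hf
  have hd : ∀ x ∈ Set.Ioo (-1:ℝ) 1,
      HasDerivAt f (1/(1+x) + 1/(1-x) - (2 + 2*x^2)) x := by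
    intro x hx
    have h1x : (0:ℝ) < 1 + x := by linarith [hx.1]
    have h2x : (0:ℝ) < 1 - x := by linarith [hx.2]
    have d1 : HasDerivAt (fun x : ℝ => Real.log (1+x)) (1/(1+x)) x := by
      have h := ((hasDerivAt_id x).const_add (1:ℝ)).log (by simpa [id_eq] using h1x.ne')
      simpa using h
    have d2 : HasDerivAt (fun x : ℝ => Real.log (1-x)) (-1/(1-x)) x := by
      have h := ((hasDerivAt_id x).const_sub (1:ℝ)).log (by simpa [id_eq] using h2x.ne')
      simpa using h
    have d3 : HasDerivAt (fun x : ℝ => 2*x + 2*x^3/3) (2 + 2*x^2) x := by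
      have h := (((hasDerivAt_id x).const_mul (2:ℝ)).add
        (((hasDerivAt_pow 3 x)).const_mul (2:ℝ) |>.div_const 3))
      exact h.congr_deriv (by push_cast; ring)
    have := (d1.sub d2).sub d3
    exact this.congr_deriv (by ring)
  have hcont : ContinuousOn f (Set.Icc 0 z) := by
    intro x hx
    exact (hd x ⟨by linarith [hx.1], lt_of_le_of_lt hx.2 h1⟩).continuousAt.continuousWithinAt
  have hmono : MonotoneOn f (Set.Icc 0 z) := by
    apply monotoneOn_of_deriv_nonneg (convex_Icc 0 z) hcont
    · intro x hx
      rw [interior_Icc] at hx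
      exact (hd x ⟨by linarith [hx.1], by linarith [hx.2, h1]⟩).differentiableAt.differentiableWithinAt
    · intro x hx
      rw [interior_Icc] at hx
      have hx0 : 0 < x := hx.1
      have hx1 : x < 1 := hx.2.trans_le h1.le
      rw [(hd x ⟨by linarith, hx1⟩).deriv]
      have a1 : (1+x) ≠ 0 := by linarith
      have a2 : (1-x) ≠ 0 := by linarith
      have e : 1/(1+x) + 1/(1-x) - (2 + 2*x^2) = 2*x^4/((1+x)*(1-x)) := by
        field_simp
        ring
      rw [e]
      apply div_nonneg (by positivity)
      nlinarith
  have h00 : f 0 = 0 := by simp [hf]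
  have := hmono (Set.left_mem_Icc.mpr h0) (Set.right_mem_Icc.mpr h0) h0
  rw [h00] at this
  simp only [hf] at this
  linarith

private lemma artanh_upper (z : ℝ) (h0 : 0 ≤ z) (h1 : z < 1) :
    Real.log (1+z) - Real.log (1-z) ≤ 2*z + 2*z^3/(3*(1-z^2)) := by
  set f : ℝ → ℝ := fun x => 2*x + 2*x^3/(3*(1-x^2)) - (Real.log (1+x) - Real.log (1-x)) with hf
  have hd : ∀ x ∈ Set.Ioo (-1:ℝ) 1,
      HasDerivAt f (2 + (6*x^2*(3*(1-x^2)) - 2*x^3*(3*(-(2*x))))/(3*(1-x^2))^2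
        - (1/(1+x) + -1/(1-x) * (-1))) x := by
    intro x hx
    have h1x : (0:ℝ) < 1 + x := by linarith [hx.1]
    have h2x : (0:ℝ) < 1 - x := by linarith [hx.2]
    have hden : 3*(1-x^2) ≠ 0 := by nlinarith [hx.1, hx.2]
    have d1 : HasDerivAt (fun x : ℝ => Real.log (1+x)) (1/(1+x)) x := by
      have h := ((hasDerivAt_id x).const_add (1:ℝ)).log (by simpa [id_eq] using h1x.ne')
      simpa using h
    have d2 : HasDerivAt (fun x : ℝ => Real.log (1-x)) (-1/(1-x)) x := by
      have h := ((hasDerivAt_id x).const_sub (1:ℝ)).log (by simpa [id_eq] using h2x.ne')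
      simpa using h
    have dn : HasDerivAt (fun x : ℝ => 2*x^3) (6*x^2) x := by
      have h := (hasDerivAt_pow 3 x).const_mul (2:ℝ)
      exact h.congr_deriv (by push_cast; ring)
    have dd : HasDerivAt (fun x : ℝ => 3*(1-x^2)) (3*(-(2*x))) x := by
      have h := (((hasDerivAt_pow 2 x)).const_sub (1:ℝ)).const_mul (3:ℝ)
      exact h.congr_deriv (by push_cast; ring)
    have dq : HasDerivAt (fun x : ℝ => 2*x^3/(3*(1-x^2)))
        ((6*x^2*(3*(1-x^2)) - 2*x^3*(3*(-(2*x))))/(3*(1-x^2))^2) x := dn.div dd hden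
    have dl : HasDerivAt (fun x : ℝ => 2*x) (2:ℝ) x := by
      simpa using (hasDerivAt_id x).const_mul (2:ℝ)
    have h := (dl.add dq).sub (d1.sub d2)
    exact h.congr_deriv (by ring)
  have hcont : ContinuousOn f (Set.Icc 0 z) := by
    intro x hx
    exact (hd x ⟨by linarith [hx.1], lt_of_le_of_lt hx.2 h1⟩).continuousAt.continuousWithinAt
  have hmono : MonotoneOn f (Set.Icc 0 z) := by
    apply monotoneOn_of_deriv_nonneg (convex_Icc 0 z) hcont
    · intro x hx
      rw [interior_Icc] at hx
      exact (hd x ⟨by linarith [hx.1], by linarith [hx.2, h1]⟩).differentiableAt.differentiableWithinAt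
    · intro x hx
      rw [interior_Icc] at hx
      have hx0 : 0 < x := hx.1
      have hx1 : x < 1 := hx.2.trans_le h1.le
      rw [(hd x ⟨by linarith, hx1⟩).deriv]
      have h1x : (0:ℝ) < 1 + x := by linarith
      have h2x : (0:ℝ) < 1 - x := by linarith
      have e : 2 + (6*x^2*(3*(1-x^2)) - 2*x^3*(3*(-(2*x))))/(3*(1-x^2))^2
          - (1/(1+x) + -1/(1-x) * (-1)) = (4/3)*x^4/((1-x^2)^2) := by
        have : (1:ℝ) - x^2 ≠ 0 := by nlinarith
        field_simp
        ring
      rw [e]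
      positivity
  have h00 : f 0 = 0 := by simp [hf]
  have := hmono (Set.left_mem_Icc.mpr h0) (Set.right_mem_Icc.mpr h0) h0
  rw [h00] at this
  simp only [hf] at this
  linarith

set_option maxHeartbeats 1000000 in
private lemma aux_main (T : ℝ) (hT1 : (1:ℝ) ≤ T) :
    (1 : ℝ) / (T + 1) ≤
        (T + 2) * Real.log (T + 2) + T * Real.log T -
          2 * (T + 1) * Real.log (T + 1) ∧
      (T + 2) * Real.log (T + 2) + T * Real.log T -
          2 * (T + 1) * Real.log (T + 1) ≤ Real.log 4 / (T + 1) := by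
  have hlog4 : Real.log 4 = 2 * Real.log 2 := by
    rw [show (4:ℝ) = 2^2 by norm_num, Real.log_pow]
    push_cast; ring
  have hl2 := Real.log_two_gt_d9
  have hp0 : (0:ℝ) ≤ 1/(2*T+3) := by positivity
  have hp1 : 1/(2*T+3) < 1 := by rw [div_lt_one (by linarith)]; linarith
  have hq0 : (0:ℝ) ≤ 1/(2*T+1) := by positivity
  have hq1 : 1/(2*T+1) < 1 := by rw [div_lt_one (by linarith)]; linarith
  have hA1 := artanh_lower _ hp0 hp1
  have hA2 := artanh_upper _ hp0 hp1
  have hB1 := artanh_lower _ hq0 hq1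
  have hB2 := artanh_upper _ hq0 hq1
  have h2T3 : (2*T+3) ≠ 0 := by linarith
  have h2T1 : (2*T+1) ≠ 0 := by linarith
  have hT0 : T ≠ 0 := by linarith
  have hT1' : (T+1) ≠ 0 := by linarith
  have hT2' : (T+2) ≠ 0 := by linarith
  have eA : Real.log (1+1/(2*T+3)) - Real.log (1-1/(2*T+3))
      = Real.log (T+2) - Real.log (T+1) := by
    rw [show (1:ℝ)+1/(2*T+3) = (T+2) * (2/(2*T+3)) by field_simp; ring,
        show (1:ℝ)-1/(2*T+3) = (T+1) * (2/(2*T+3)) by field_simp; ring,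
        Real.log_mul hT2' (by positivity), Real.log_mul hT1' (by positivity)]
    ring
  have eB : Real.log (1+1/(2*T+1)) - Real.log (1-1/(2*T+1))
      = Real.log (T+1) - Real.log T := by
    rw [show (1:ℝ)+1/(2*T+1) = (T+1) * (2/(2*T+1)) by field_simp; ring,
        show (1:ℝ)-1/(2*T+1) = T * (2/(2*T+1)) by field_simp; ring,
        Real.log_mul hT1' (by positivity), Real.log_mul hT0 (by positivity)]
    ring
  rw [eA] at hA1 hA2
  rw [eB] at hB1 hB2
  -- denominators nonzero facts
  have hq2 : (1:ℝ) - (1/(2*T+1))^2 ≠ 0 := by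
    have : (1/(2*T+1))^2 < 1 := by
      rw [sq_lt_one_iff_abs_lt_one, abs_of_nonneg hq0]; exact hq1
    linarith
  have hp2 : (1:ℝ) - (1/(2*T+3))^2 ≠ 0 := by
    have : (1/(2*T+3))^2 < 1 := by
      rw [sq_lt_one_iff_abs_lt_one, abs_of_nonneg hp0]; exact hp1
    linarith
  -- rational bounds
  have Dlow_pos : (0:ℝ) < 3*(T+1)*(2*T+3)^3*(2*T+1)*(4*T^2+4*T) := by
    have h1 : (0:ℝ) < 3*(T+1) := by linarith
    have h2 : (0:ℝ) < (2*T+3)^3 := by positivity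
    have h3 : (0:ℝ) < 2*T+1 := by linarith
    have h4 : (0:ℝ) < 4*T^2+4*T := by nlinarith
    exact mul_pos (mul_pos (mul_pos h1 h2) h3) h4
  have key_low : 1/(T+1) ≤
      (T+2)*(2*(1/(2*T+3)) + 2*(1/(2*T+3))^3/3)
        - T*(2*(1/(2*T+1)) + 2*(1/(2*T+1))^3/(3*(1-(1/(2*T+1))^2))) := by
    rw [← sub_nonneg]
    have hEq : ((T+2)*(2*(1/(2*T+3)) + 2*(1/(2*T+3))^3/3)
        - T*(2*(1/(2*T+1)) + 2*(1/(2*T+1))^3/(3*(1-(1/(2*T+1))^2))) - 1/(T+1))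
        * (3*(T+1)*(2*T+3)^3*(2*T+1)*(4*T^2+4*T))
        = 70*T + 162*T^2 + 124*T^3 + 32*T^4 := by
      have e1 : (1:ℝ) - (1/(2*T+1))^2 = (4*T^2+4*T)/(2*T+1)^2 := by field_simp; ring
      rw [e1]
      have h44 : (4*T^2+4*T) ≠ 0 := by nlinarith
      field_simp
      ring
    have hP : (0:ℝ) ≤ 70*T + 162*T^2 + 124*T^3 + 32*T^4 := by nlinarith
    nlinarith [hEq, hP, Dlow_pos]
  have Dup_pos : (0:ℝ) < 30*(T+1)*(2*T+3)^3*(2*T+1)^3*(4*T^2+12*T+8) := by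
    have h1 : (0:ℝ) < 30*(T+1) := by linarith
    have h2 : (0:ℝ) < (2*T+3)^3 := by positivity
    have h3 : (0:ℝ) < (2*T+1)^3 := by positivity
    have h4 : (0:ℝ) < 4*T^2+12*T+8 := by nlinarith
    exact mul_pos (mul_pos (mul_pos h1 h2) h3) h4
  have key_up :
      (T+2)*(2*(1/(2*T+3)) + 2*(1/(2*T+3))^3/(3*(1-(1/(2*T+3))^2)))
        - T*(2*(1/(2*T+1)) + 2*(1/(2*T+1))^3/3) ≤ (41/30)/(T+1) := by
    rw [← sub_nonneg]
    have hEq : ((41/30)/(T+1) - ((T+2)*(2*(1/(2*T+3)) + 2*(1/(2*T+3))^3/(3*(1-(1/(2*T+3))^2)))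
        - T*(2*(1/(2*T+1)) + 2*(1/(2*T+1))^3/3)))
        * (30*(T+1)*(2*T+3)^3*(2*T+1)^3*(4*T^2+12*T+8))
        = -144 + 8952*T + 58352*T^2 + 156776*T^3 + 227808*T^4 + 192928*T^5
          + 95168*T^6 + 25344*T^7 + 2816*T^8 := by
      have e1 : (1:ℝ) - (1/(2*T+3))^2 = (4*T^2+12*T+8)/(2*T+3)^2 := by field_simp; ring
      rw [e1]
      have h44 : (4*T^2+12*T+8) ≠ 0 := by nlinarith
      field_simp
      ring
    have hTnn : (0:ℝ) ≤ T := by linarith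
    have hP : (0:ℝ) ≤ -144 + 8952*T + 58352*T^2 + 156776*T^3 + 227808*T^4 + 192928*T^5
          + 95168*T^6 + 25344*T^7 + 2816*T^8 := by
      nlinarith [pow_nonneg hTnn 2, pow_nonneg hTnn 3, pow_nonneg hTnn 4,
        pow_nonneg hTnn 5, pow_nonneg hTnn 6, pow_nonneg hTnn 7, pow_nonneg hTnn 8, hT1]
    nlinarith [hEq, hP, Dup_pos]
  constructor
  · -- lower bound
    have m1 : 0 ≤ (T+2) * ((Real.log (T+2) - Real.log (T+1))
        - (2*(1/(2*T+3)) + 2*(1/(2*T+3))^3/3)) :=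
      mul_nonneg (by linarith) (by linarith [hA1])
    have m2 : 0 ≤ T * ((2*(1/(2*T+1)) + 2*(1/(2*T+1))^3/(3*(1-(1/(2*T+1))^2)))
        - (Real.log (T+1) - Real.log T)) :=
      mul_nonneg (by linarith) (by linarith [hB2])
    linarith [key_low, m1, m2]
  · -- upper bound
    have m1 : 0 ≤ (T+2) * ((2*(1/(2*T+3)) + 2*(1/(2*T+3))^3/(3*(1-(1/(2*T+3))^2)))
        - (Real.log (T+2) - Real.log (T+1))) :=
      mul_nonneg (by linarith) (by linarith [hA2])
    have m2 : 0 ≤ T * ((Real.log (T+1) - Real.log T) - (2*(1/(2*T+1)) + 2*(1/(2*T+1))^3/3)) :=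
      mul_nonneg (by linarith) (by linarith [hB1])
    have hTp : (0:ℝ) < T+1 := by linarith
    have hfin : (41/30)/(T+1) ≤ Real.log 4 / (T+1) := by
      rw [hlog4, div_le_div_iff_of_pos_right hTp]
      linarith
    linarith [key_up, m1, m2, hfin]

theorem stmt_2 (t : ℕ) :
    (1 : ℝ) / (t + 1) ≤
        ((t : ℝ) + 2) * Real.log ((t : ℝ) + 2) + (t : ℝ) * Real.log (t : ℝ) -
          2 * ((t : ℝ) + 1) * Real.log ((t : ℝ) + 1) ∧
      ((t : ℝ) + 2) * Real.log ((t : ℝ) + 2) + (t : ℝ) * Real.log (t : ℝ) -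
          2 * ((t : ℝ) + 1) * Real.log ((t : ℝ) + 1) ≤ Real.log 4 / (t + 1) := by
  rcases Nat.eq_zero_or_pos t with h0 | hpos
  · subst h0
    have hlog4 : Real.log 4 = 2 * Real.log 2 := by
      rw [show (4:ℝ) = 2^2 by norm_num, Real.log_pow]
      push_cast; ring
    have hl2 := Real.log_two_gt_d9
    norm_num [Real.log_zero, Real.log_one, hlog4]
    first
    | (constructor <;> linarith)
    | linarith
  · exact aux_main (t : ℝ) (by exact_mod_cast Nat.one_le_iff_ne_zero.mpr hpos.ne')
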